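/- Let f, g : {0,1}^n → {0,1} be Boolean functions. If there exists a ∈ {0,1}^n such that f and g agree on every point at Hamming distance at most s(f) + s(g) from a, then f = g. -/

import Mathlib

open Finset

variable {ι : Type*} [Fintype ι] [DecidableEq ι]

/-- Flip one coordinate of a Boolean input. -/
def bflip (x : ι → Bool) (i : ι) : ι → Bool := Function.update x i (!x i)

/-- Flip a block (set) of coordinates of a Boolean input. -/
def bflipS (x : ι → Bool) (B : Finset ι) : ι → Bool := fun j => if j ∈ B then !x j else x j

/-- Sensitivity of `f` at `x`. -/
def sensAt (f : (ι → Bool) → Bool) (x : ι → Bool) : ℕ :=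
  (univ.filter fun i => f (bflip x i) ≠ f x).card

/-- Sensitivity of `f`. -/
def sens (f : (ι → Bool) → Bool) : ℕ := univ.sup (sensAt f)

/-- 0-sensitivity of `f`. -/
def sens0 (f : (ι → Bool) → Bool) : ℕ := (univ.filter fun x => f x = false).sup (sensAt f)

/-- 1-sensitivity of `f`. -/
def sens1 (f : (ι → Bool) → Bool) : ℕ := (univ.filter fun x => f x = true).sup (sensAt f)

/-- Block sensitivity of `f` at `x`: the largest number of pairwise disjoint
sensitive blocks. -/
noncomputable def bsAt (f : (ι → Bool) → Bool) (x : ι → Bool) : ℕ :=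
  sSup {k | ∃ B : Fin k → Finset ι, (∀ i j, i ≠ j → Disjoint (B i) (B j)) ∧
    ∀ j, f (bflipS x (B j)) ≠ f x}

/-- Block sensitivity of `f`. -/
noncomputable def bs (f : (ι → Bool) → Bool) : ℕ := univ.sup (bsAt f)

/-- 0-block sensitivity of `f`. -/
noncomputable def bs0 (f : (ι → Bool) → Bool) : ℕ := (univ.filter fun x => f x = false).sup (bsAt f)

/-- A DNF term, given by its positive variable set `t.1` and negative variable
set `t.2`, is true on `x`. -/
def TermTrue {n : ℕ} (t : Finset (Fin n) × Finset (Fin n)) (x : Fin n → Bool) : Prop :=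
  (∀ j ∈ t.1, x j = true) ∧ (∀ j ∈ t.2, x j = false)

theorem eq_of_agree_on_ball {n : ℕ} (f g : (Fin n → Bool) → Bool)
    (h : ∃ a : Fin n → Bool, ∀ x : Fin n → Bool,
      hammingDist x a ≤ sens f + sens g → f x = g x) : f = g := by
  obtain ⟨a, ha⟩ := h
  funext x
  suffices H : ∀ d, ∀ x : Fin n → Bool, hammingDist x a = d → f x = g x from H _ x rfl
  intro d
  induction d using Nat.strong_induction_on with
  | _ d ih =>
    intro x hx
    by_cases hd : d ≤ sens f + sens g
    · exact ha x (hx ▸ hd)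
    push_neg at hd
    set D := univ.filter (fun i => x i ≠ a i) with hDdef
    have hcard : D.card = d := hx
    have hsf : (D.filter fun i => f (bflip x i) ≠ f x).card ≤ sens f :=
      le_trans (card_le_card (filter_subset_filter _ (subset_univ D)))
        (le_trans (le_refl (sensAt f x)) (le_sup (mem_univ x)))
    have hsg : (D.filter fun i => g (bflip x i) ≠ g x).card ≤ sens g :=
      le_trans (card_le_card (filter_subset_filter _ (subset_univ D)))
        (le_trans (le_refl (sensAt g x)) (le_sup (mem_univ x)))
    have hlt : ((D.filter fun i => f (bflip x i) ≠ f x) ∪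
        (D.filter fun i => g (bflip x i) ≠ g x)).card < D.card := by
      calc _ ≤ _ + _ := card_union_le _ _
        _ ≤ sens f + sens g := Nat.add_le_add hsf hsg
        _ < d := hd
        _ = D.card := hcard.symm
    obtain ⟨i, hiD, hiS⟩ := Finset.not_subset.mp (fun hsub => absurd (card_le_card hsub) (not_le.mpr hlt))
    have hfi : f (bflip x i) = f x := by
      by_contra hne; exact hiS (mem_union_left _ (mem_filter.mpr ⟨hiD, hne⟩))
    have hgi : g (bflip x i) = g x := by
      by_contra hne; exact hiS (mem_union_right _ (mem_filter.mpr ⟨hiD, hne⟩))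
    have hxi : x i ≠ a i := (mem_filter.mp hiD).2
    have hset : (univ.filter fun j => bflip x i j ≠ a j) = D.erase i := by
      ext j
      simp only [mem_filter, mem_univ, true_and, mem_erase, hDdef]; simp only [bflip]
      by_cases hji : j = i
      · subst hji
        simp [Function.update_self]
        revert hxi; cases x j <;> cases a j <;> simp
      · simp [Function.update_of_ne hji, hji]
    have hdist : hammingDist (bflip x i) a = d - 1 := by
      show (univ.filter fun j => bflip x i j ≠ a j).card = d - 1
      rw [hset, card_erase_of_mem hiD, hcard]
    have hd1 : d - 1 < d := Nat.sub_lt (by omega) one_pos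
    have := ih (d - 1) hd1 (bflip x i) hdist
    rw [← hfi, ← hgi, this]
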